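/- Let d ≥ 1 and let Γ be an additive sub-semigroup of ℕ^{d+1} that is finitely generated as a semigroup and that generates ℤ^{d+1} as a group. Then there exists an element γ ∈ Γ such that every point of ℕ^{d+1} lying in the translated cone γ + Σ(Γ) belongs to Γ; that is, (γ + Σ(Γ)) ∩ ℕ^{d+1} ⊆ Γ. -/

import Mathlib

/-- The image of a vector of natural numbers in `ℝ^n`. -/
def natVecR {n : ℕ} (γ : Fin n → ℕ) : Fin n → ℝ := fun i => (γ i : ℝ)

/-- `Σ(Γ)`: the closed convex cone generated by `Γ ⊆ ℕ^n` in `ℝ^n`, i.e. the topological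
closure of the set of all finite nonnegative real linear combinations of elements of `Γ`. -/
def coneOf {n : ℕ} (Γ : Set (Fin n → ℕ)) : Set (Fin n → ℝ) :=
  closure { x | ∃ (k : ℕ) (c : Fin k → ℝ) (g : Fin k → (Fin n → ℕ)),
    (∀ i, 0 ≤ c i) ∧ (∀ i, g i ∈ Γ) ∧ x = ∑ i, c i • natVecR (g i) }

private lemma sum_eq_sum_of_zero_outside {k : ℕ} {M : Type*} [AddCommMonoid M]
    (t : Finset (Fin k)) (f : Fin k → M) (hf : ∀ i ∉ t, f i = 0) :
    ∑ i ∈ t, f i = ∑ i, f i :=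
  Finset.sum_subset (Finset.subset_univ t) (fun i _ hi => hf i hi)

private lemma cara_aux {n k : ℕ} (w : Fin k → (Fin n → ℝ)) :
    ∀ (N : ℕ) (c : Fin k → ℝ), (Finset.univ.filter (fun i => c i ≠ 0)).card ≤ N →
      (∀ i, 0 ≤ c i) →
      ∃ (t : Finset (Fin k)) (c' : Fin k → ℝ),
        LinearIndependent ℝ (fun i : t => w i) ∧ (∀ i, 0 ≤ c' i) ∧
        (∀ i ∉ t, c' i = 0) ∧ ∑ i, c' i • w i = ∑ i, c i • w i := by
  intro N
  induction N with
  | zero =>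
    intro c hcard hc
    have ht : (Finset.univ.filter (fun i => c i ≠ 0)) = ∅ := Finset.card_eq_zero.mp (Nat.le_zero.mp hcard)
    haveI : IsEmpty ((∅ : Finset (Fin k)) : Set (Fin k)) := by simp
    refine ⟨∅, c, ?_, hc, ?_, rfl⟩
    · exact linearIndependent_empty_type
    · intro i _
      by_contra h
      have : i ∈ Finset.univ.filter (fun i => c i ≠ 0) := by simp [h]
      simp [ht] at this
  | succ N ih =>
    intro c hcard hc
    set t := Finset.univ.filter (fun i => c i ≠ 0) with ht
    by_cases hli : LinearIndependent ℝ (fun i : t => w i)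
    · refine ⟨t, c, hli, hc, ?_, rfl⟩
      intro i hi
      by_contra h
      exact hi (by simp [ht, h])
    · rw [Fintype.not_linearIndependent_iff] at hli
      obtain ⟨g, hg0, i₀, hgi₀⟩ := hli
      -- build a : Fin k → ℝ with positive value somewhere, supported in t, relation 0
      set ε : ℝ := if 0 < g i₀ then 1 else -1 with hε
      set a : Fin k → ℝ := fun i => if h : i ∈ t then ε * g ⟨i, h⟩ else 0 with ha
      have hasupp : ∀ i ∉ t, a i = 0 := fun i hi => by simp [ha, hi]
      have harel : ∑ i, a i • w i = 0 := by
        rw [← sum_eq_sum_of_zero_outside t (fun i => a i • w i)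
          (fun i hi => by simp [hasupp i hi])]
        rw [← Finset.sum_coe_sort t (fun i => a i • w i)]
        have : ∀ i : t, a i • w i = ε • (g i • w i) := by
          intro i; simp [ha, i.2, mul_smul]
        rw [Finset.sum_congr rfl (fun i _ => this i), ← Finset.smul_sum, hg0, smul_zero]
      have hapos : 0 < a (i₀ : Fin k) := by
        have : a (i₀ : Fin k) = ε * g i₀ := by simp [ha, i₀.2]
        rw [this, hε]
        rcases lt_trichotomy (g i₀) 0 with h | h | h
        · rw [if_neg (by linarith)]; nlinarith
        · exact absurd h hgi₀
        · rw [if_pos h]; linarith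
      -- minimize
      set Sp : Finset (Fin k) := t.filter (fun i => 0 < a i) with hSp
      have hi₀Sp : (i₀ : Fin k) ∈ Sp := by
        refine Finset.mem_filter.mpr ⟨i₀.2, hapos⟩
      obtain ⟨j, hjSp, hjmin⟩ := Finset.exists_min_image Sp (fun i => c i / a i) ⟨_, hi₀Sp⟩
      have hja : 0 < a j := (Finset.mem_filter.mp hjSp).2
      have hr : 0 ≤ c j / a j := div_nonneg (hc j) hja.le
      set r : ℝ := c j / a j with hrdef
      set c'' : Fin k → ℝ := fun i => c i - r * a i with hc''
      have hc''nonneg : ∀ i, 0 ≤ c'' i := by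
        intro i
        rcases le_or_gt (a i) 0 with h | h
        · have : r * a i ≤ 0 := mul_nonpos_iff.mpr (Or.inl ⟨hr, h⟩)
          have := hc i
          simp only [hc'']
          linarith
        · have hit : i ∈ t := by
            by_contra hit
            rw [hasupp i hit] at h; exact lt_irrefl _ h
          have hiSp : i ∈ Sp := Finset.mem_filter.mpr ⟨hit, h⟩
          have := hjmin i hiSp
          have h2 : r * a i ≤ c i := by
            rw [hrdef]
            calc c j / a j * a i ≤ c i / a i * a i := by
                  apply mul_le_mul_of_nonneg_right this h.le
              _ = c i := div_mul_cancel₀ _ h.ne'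
          simp only [hc'']
          linarith
      have hc''sum : ∑ i, c'' i • w i = ∑ i, c i • w i := by
        simp only [hc'', sub_smul, Finset.sum_sub_distrib, mul_smul]
        rw [← Finset.smul_sum, harel, smul_zero, sub_zero]
      have hc''supp : (Finset.univ.filter (fun i => c'' i ≠ 0)) ⊆ t.erase j := by
        intro i hi
        rw [Finset.mem_filter] at hi
        refine Finset.mem_erase.mpr ⟨?_, ?_⟩
        · rintro rfl
          apply hi.2
          simp only [hc'', hrdef]
          field_simp
          ring
        · by_contra hit
          apply hi.2
          have hc0 : c i = 0 := by
            by_contra h; exact hit (by simp [ht, h])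
          simp [hc'', hc0, hasupp i hit]
      have hcard' : (Finset.univ.filter (fun i => c'' i ≠ 0)).card ≤ N := by
        have h1 : (t.erase j).card < t.card := Finset.card_erase_lt_of_mem (Finset.mem_filter.mp hjSp).1
        have := Finset.card_le_card hc''supp
        omega
      obtain ⟨t', c', h1, h2, h3, h4⟩ := ih c'' hcard' hc''nonneg
      exact ⟨t', c', h1, h2, h3, h4.trans hc''sum⟩


private lemma cone_isClosed {n k : ℕ} (w : Fin k → (Fin n → ℝ)) :
    IsClosed {x : Fin n → ℝ | ∃ c : Fin k → ℝ, (∀ i, 0 ≤ c i) ∧ x = ∑ i, c i • w i} := by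
  classical
  -- the cone is the union over linearly independent subfamilies
  have key : {x : Fin n → ℝ | ∃ c : Fin k → ℝ, (∀ i, 0 ≤ c i) ∧ x = ∑ i, c i • w i} =
      ⋃ t : {t : Finset (Fin k) // LinearIndependent ℝ (fun i : t => w i)},
        (Fintype.linearCombination ℝ (fun i : (t : Finset (Fin k)) => w i)) ''
          {y | ∀ i, 0 ≤ y i} := by
    ext x
    simp only [Set.mem_setOf_eq, Set.mem_iUnion, Set.mem_image]
    constructor
    · rintro ⟨c, hc, rfl⟩
      obtain ⟨t, c', hli, hc', hsupp, hsum⟩ := cara_aux w _ c le_rfl hc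
      refine ⟨⟨t, hli⟩, fun i => c' i, fun i => hc' i, ?_⟩
      rw [Fintype.linearCombination_apply]
      rw [← hsum, ← sum_eq_sum_of_zero_outside t (fun i => c' i • w i)
        (fun i hi => by simp [hsupp i hi])]
      rw [← Finset.sum_coe_sort t (fun i => c' i • w i)]
    · rintro ⟨⟨t, hli⟩, y, hy, rfl⟩
      refine ⟨fun i => if h : i ∈ t then y ⟨i, h⟩ else 0, ?_, ?_⟩
      · intro i; by_cases h : i ∈ t <;> simp [h, hy]
      · rw [Fintype.linearCombination_apply]
        rw [← sum_eq_sum_of_zero_outside t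
          (fun i => (if h : i ∈ t then y ⟨i, h⟩ else 0) • w i) (fun i hi => by simp [hi])]
        rw [← Finset.sum_coe_sort t]
        exact Finset.sum_congr rfl (fun i _ => by simp [i.2])
  rw [key]
  apply isClosed_iUnion_of_finite
  rintro ⟨t, hli⟩
  have hinj : LinearMap.ker (Fintype.linearCombination ℝ (fun i : t => w i)) = ⊥ := by
    rw [LinearMap.ker_eq_bot']
    intro y hy
    rw [Fintype.linearCombination_apply] at hy
    exact funext (Fintype.linearIndependent_iff.mp hli y hy)
  have hce := LinearMap.isClosedEmbedding_of_injective hinj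
  apply hce.isClosedMap
  show IsClosed {y : ↥t → ℝ | ∀ i, 0 ≤ y i}
  have : {y : ↥t → ℝ | ∀ i, 0 ≤ y i} = Set.univ.pi (fun _ => Set.Ici (0:ℝ)) := by
    ext y; simp [Set.mem_pi, Pi.le_def, Subtype.forall]
  rw [this]
  exact isClosed_set_pi (fun i _ => isClosed_Ici)


private lemma rat_coeffs {n k : ℕ} (v : Fin k → (Fin n → ℕ)) (z : Fin n → ℤ)
    (c : Fin k → ℝ) (hc : ∀ i, 0 ≤ c i)
    (hz : (fun j => (z j : ℝ)) = ∑ i, c i • (fun j => ((v i j : ℝ)))) :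
    ∃ q : Fin k → ℚ, (∀ i, 0 ≤ q i) ∧ ∀ j, (z j : ℚ) = ∑ i, q i * (v i j) := by
  classical
  set w : Fin k → (Fin n → ℝ) := fun i j => (v i j : ℝ) with hw
  obtain ⟨t, c', hli, hc', hsupp, hsum⟩ := cara_aux w _ c le_rfl hc
  have hz0 : (fun j => (z j : ℝ)) = ∑ i, c' i • w i := by rw [hsum]; exact hz
  have hz' : ∀ j, (z j : ℝ) = ∑ i, c' i * (v i j : ℝ) := by
    intro j
    have := congrFun hz0 j
    simpa [Finset.sum_apply, hw] using this
  set wq : Fin k → (Fin n → ℚ) := fun i j => (v i j : ℚ) with hwq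
  set zq : Fin n → ℚ := fun j => (z j : ℚ) with hzq
  have hmem : zq ∈ Submodule.span ℚ (Set.range (fun i : t => wq i)) := by
    by_contra hmem
    obtain ⟨f, hf0, hfbot⟩ :=
      Submodule.exists_dual_map_eq_bot_of_notMem hmem inferInstance
    have hfw : ∀ i : t, f (wq i) = 0 := by
      intro i
      have h1 : wq i ∈ Submodule.span ℚ (Set.range (fun i : t => wq i)) :=
        Submodule.subset_span ⟨i, rfl⟩
      have h2 : f (wq i) ∈ (Submodule.span ℚ (Set.range (fun i : t => wq i))).map f :=
        Submodule.mem_map_of_mem h1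
      rw [hfbot] at h2
      exact (Submodule.mem_bot ℚ).mp h2
    set a : Fin n → ℚ := fun j => f (fun j' => if j = j' then 1 else 0) with ha
    have hfav : ∀ y : Fin n → ℚ, f y = ∑ j, y j * a j := by
      intro y
      have := LinearMap.pi_apply_eq_sum_univ f y
      simpa [ha, smul_eq_mul] using this
    have hinner : ∀ i : Fin k, ((∑ j, (v i j : ℚ) * a j : ℚ) : ℝ) =
        ∑ j, (a j : ℝ) * (v i j : ℝ) := by
      intro i; push_cast; rw [Finset.sum_congr rfl]; intro j _; ring
    have hE : ∑ j, (a j : ℝ) * (z j : ℝ) = 0 := by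
      calc ∑ j, (a j : ℝ) * (z j : ℝ)
          = ∑ j, (a j : ℝ) * (∑ i, c' i * (v i j : ℝ)) := by
            exact Finset.sum_congr rfl (fun j _ => by rw [← hz' j])
        _ = ∑ j, ∑ i, c' i * ((a j : ℝ) * (v i j : ℝ)) := by
            exact Finset.sum_congr rfl (fun j _ => by rw [Finset.mul_sum]; exact Finset.sum_congr rfl (fun i _ => by ring))
        _ = ∑ i, ∑ j, c' i * ((a j : ℝ) * (v i j : ℝ)) := Finset.sum_comm
        _ = ∑ i, c' i * (∑ j, (a j : ℝ) * (v i j : ℝ)) := by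
            exact Finset.sum_congr rfl (fun i _ => by rw [Finset.mul_sum])
        _ = 0 := by
            apply Finset.sum_eq_zero
            intro i _
            by_cases hit : i ∈ t
            · have := hfw ⟨i, hit⟩
              rw [hfav] at this
              have h2 : ((∑ j, (v i j : ℚ) * a j : ℚ) : ℝ) = 0 := by
                rw [show (∑ j, (wq i j) * a j) = (∑ j, ((v i j : ℚ)) * a j) from rfl] at this
                rw [this]; norm_num
              rw [hinner i] at h2
              rw [h2, mul_zero]
            · rw [hsupp i hit, zero_mul]
    have hfz : ((f zq : ℚ) : ℝ) = ∑ j, (a j : ℝ) * (z j : ℝ) := by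
      rw [hfav]
      push_cast
      exact Finset.sum_congr rfl (fun j _ => by simp [hzq]; ring)
    rw [hE] at hfz
    exact hf0 (by exact_mod_cast hfz)
  rw [Submodule.mem_span_range_iff_exists_fun] at hmem
  obtain ⟨g, hg⟩ := hmem
  set q : Fin k → ℚ := fun i => if h : i ∈ t then g ⟨i, h⟩ else 0 with hq
  have hqsupp : ∀ i ∉ t, q i = 0 := fun i hi => by simp [hq, hi]
  have hqeq : ∀ j, (z j : ℚ) = ∑ i, q i * (v i j : ℚ) := by
    intro j
    have h := congrFun hg j
    simp only [Finset.sum_apply, Pi.smul_apply, smul_eq_mul] at h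
    calc (z j : ℚ) = ∑ x : t, g x * wq (x : Fin k) j := h.symm
      _ = ∑ i : t, (fun i => q i * (v i j : ℚ)) (i : Fin k) :=
          Finset.sum_congr rfl (fun i _ => by simp [hq, i.2, hwq])
      _ = ∑ i ∈ t, q i * (v i j : ℚ) := Finset.sum_coe_sort t (fun i => q i * (v i j : ℚ))
      _ = ∑ i, q i * (v i j : ℚ) := sum_eq_sum_of_zero_outside t _
          (fun i hi => by rw [hqsupp i hi, zero_mul])
  -- nonnegativity via linear independence
  have hreal : ∑ i : t, (c' i - (q i : ℝ)) • w i = 0 := by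
    have h1 : (fun j => (z j : ℝ)) = ∑ i, (q i : ℝ) • w i := by
      funext j
      rw [Finset.sum_apply]
      have := hqeq j
      have h2 : ((z j : ℚ) : ℝ) = ((∑ i, q i * (v i j : ℚ) : ℚ) : ℝ) := by rw [this]
      push_cast at h2
      simpa [hw] using h2
    have h2 : ∑ i, (c' i - (q i : ℝ)) • w i = 0 := by
      simp only [sub_smul, Finset.sum_sub_distrib]
      rw [← hz0, ← h1, sub_self]
    rw [← h2]
    calc ∑ i : t, (fun i => (c' i - (q i : ℝ)) • w i) (i : Fin k)
        = ∑ i ∈ t, (c' i - (q i : ℝ)) • w i := Finset.sum_coe_sort t (fun i => (c' i - (q i : ℝ)) • w i)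
      _ = ∑ i, (c' i - (q i : ℝ)) • w i := sum_eq_sum_of_zero_outside t _
          (fun i hi => by rw [hsupp i hi, hqsupp i hi]; norm_num)
  have hzero := Fintype.linearIndependent_iff.mp hli (fun i : t => c' i - (q i : ℝ)) hreal
  refine ⟨q, ?_, fun j => by exact_mod_cast hqeq j⟩
  intro i
  by_cases hit : i ∈ t
  · have := hzero ⟨i, hit⟩
    have hci : c' i = (q i : ℝ) := by linarith [sub_eq_zero.mp this]
    have := hc' i
    rw [hci] at this
    exact_mod_cast this
  · rw [hqsupp i hit]


theorem khovanskii (d : ℕ) (hd : 1 ≤ d) (Γ : Set (Fin (d+1) → ℕ))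
    (h0 : (0 : Fin (d+1) → ℕ) ∈ Γ)
    (hadd : ∀ x ∈ Γ, ∀ y ∈ Γ, x + y ∈ Γ)
    (hfg : ∃ S : Finset (Fin (d+1) → ℕ), (S : Set (Fin (d+1) → ℕ)) ⊆ Γ ∧
      Γ = ↑(AddSubmonoid.closure (S : Set (Fin (d+1) → ℕ))))
    (hgen : AddSubgroup.closure
        ((fun γ : Fin (d+1) → ℕ => (fun i => (γ i : ℤ))) '' Γ) = ⊤) :
    ∃ γ ∈ Γ, ∀ β : Fin (d+1) → ℕ,
      (∃ x ∈ coneOf Γ, natVecR β = natVecR γ + x) → β ∈ Γ := by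
  classical
  obtain ⟨S, hSΓ, hΓ⟩ := hfg
  set k := S.card with hk
  set v : Fin k → (Fin (d+1) → ℕ) := fun i => (S.equivFin.symm i : Fin (d+1) → ℕ) with hv
  have hvS : ∀ i, v i ∈ S := fun i => (S.equivFin.symm i).2
  have hSv : ∀ s ∈ S, ∃ i, v i = s := fun s hs =>
    ⟨S.equivFin ⟨s, hs⟩, by simp [hv]⟩
  set w : Fin k → (Fin (d+1) → ℝ) := fun i j => (v i j : ℝ) with hw
  -- every element of Γ is a nonnegative combination of the w i
  have hΓC : ∀ g ∈ Γ, ∃ cg : Fin k → ℝ, (∀ i, 0 ≤ cg i) ∧ natVecR g = ∑ i, cg i • w i := by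
    intro g hg
    rw [hΓ, SetLike.mem_coe] at hg
    induction hg using AddSubmonoid.closure_induction with
    | mem s hs =>
      obtain ⟨i, hi⟩ := hSv s hs
      refine ⟨fun i' => if i' = i then 1 else 0, fun i' => by positivity, ?_⟩
      have : ∑ i', (if i' = i then (1:ℝ) else 0) • w i' = w i := by
        simp [ite_smul]
      rw [this, ← hi]
      funext j
      simp [natVecR, hw]
    | zero =>
      exact ⟨0, fun i => le_rfl, by funext j; simp [natVecR]⟩
    | add a b ha hb iha ihb =>
      obtain ⟨ca, hca, hca2⟩ := iha
      obtain ⟨cb, hcb, hcb2⟩ := ihb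
      refine ⟨ca + cb, fun i => add_nonneg (hca i) (hcb i), ?_⟩
      have : natVecR (a + b) = natVecR a + natVecR b := by
        funext j; simp [natVecR]
      rw [this, hca2, hcb2]
      simp [add_smul, Finset.sum_add_distrib]
  -- the cone is contained in the closed finitely-generated cone C
  set C : Set (Fin (d+1) → ℝ) :=
    {x | ∃ c : Fin k → ℝ, (∀ i, 0 ≤ c i) ∧ x = ∑ i, c i • w i} with hC
  have hconeC : coneOf Γ ⊆ C := by
    apply closure_minimal ?_ (cone_isClosed w)
    rintro x ⟨m, c, g, hc, hgΓ, rfl⟩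
    choose cg hcg1 hcg2 using fun i => hΓC (g i) (hgΓ i)
    refine ⟨fun j => ∑ i, c i * cg i j,
      fun j => Finset.sum_nonneg (fun i _ => mul_nonneg (hc i) (hcg1 i j)), ?_⟩
    calc ∑ i, c i • natVecR (g i)
        = ∑ i, c i • ∑ j, cg i j • w j :=
          Finset.sum_congr rfl (fun i _ => by rw [hcg2 i])
      _ = ∑ i, ∑ j, (c i * cg i j) • w j := by
          refine Finset.sum_congr rfl (fun i _ => ?_)
          rw [Finset.smul_sum]
          exact Finset.sum_congr rfl (fun j _ => by rw [mul_smul])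
      _ = ∑ j, ∑ i, (c i * cg i j) • w j := Finset.sum_comm
      _ = ∑ j, (∑ i, c i * cg i j) • w j := by
          refine Finset.sum_congr rfl (fun j _ => ?_)
          rw [Finset.sum_smul]
  -- the group generated by Γ is everything: differences
  have hgrp : ∀ ρ : Fin (d+1) → ℕ, ∃ a ∈ Γ, ∃ b ∈ Γ, ρ + b = a := by
    set G : AddSubgroup (Fin (d+1) → ℤ) :=
      { carrier := {zz | ∃ a ∈ Γ, ∃ b ∈ Γ,
          zz + (fun i => ((b i : ℤ))) = fun i => (a i : ℤ)}
        zero_mem' := ⟨0, h0, 0, h0, by funext j; simp⟩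
        add_mem' := by
          rintro z₁ z₂ ⟨a₁, ha₁, b₁, hb₁, h₁⟩ ⟨a₂, ha₂, b₂, hb₂, h₂⟩
          refine ⟨a₁ + a₂, hadd _ ha₁ _ ha₂, b₁ + b₂, hadd _ hb₁ _ hb₂, ?_⟩
          funext j
          have e1 := congrFun h₁ j
          have e2 := congrFun h₂ j
          simp only [Pi.add_apply] at *
          push_cast
          omega
        neg_mem' := by
          rintro zz ⟨a, ha, b, hb, h⟩
          refine ⟨b, hb, a, ha, ?_⟩
          funext j
          have e := congrFun h j
          simp only [Pi.add_apply, Pi.neg_apply] at *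
          omega } with hG
    have htop : ∀ zz : Fin (d+1) → ℤ, zz ∈ G := by
      intro zz
      have hle : AddSubgroup.closure
          ((fun γ : Fin (d+1) → ℕ => (fun i => (γ i : ℤ))) '' Γ) ≤ G := by
        rw [AddSubgroup.closure_le]
        rintro _ ⟨g, hg, rfl⟩
        exact ⟨g, hg, 0, h0, by funext j; simp⟩
      exact hle (hgen ▸ AddSubgroup.mem_top zz)
    intro ρ
    obtain ⟨a, ha, b, hb, h⟩ := htop (fun j => (ρ j : ℤ))
    refine ⟨a, ha, b, hb, funext fun j => ?_⟩
    have e := congrFun h j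
    simp only [Pi.add_apply] at *
    omega
  choose A hA B hB hAB using hgrp
  set T : Fin (d+1) → ℕ := fun j => ∑ i, v i j with hT
  set F : Finset (Fin (d+1) → ℕ) := Fintype.piFinset (fun j => Finset.range (T j + 1)) with hF
  set γ0 : Fin (d+1) → ℕ := ∑ ρ' ∈ F, B ρ' with hγ0
  set Γ' : AddSubmonoid (Fin (d+1) → ℕ) :=
    { carrier := Γ
      zero_mem' := h0
      add_mem' := fun hx hy => hadd _ hx _ hy } with hΓ'
  have hmemΓ' : ∀ x : Fin (d+1) → ℕ, x ∈ Γ' ↔ x ∈ Γ := fun x => Iff.rfl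
  have hγ0Γ : γ0 ∈ Γ := by
    rw [← hmemΓ' γ0, hγ0]
    exact AddSubmonoid.sum_mem Γ' (fun ρ' _ => hB ρ')
  refine ⟨γ0, hγ0Γ, ?_⟩
  rintro β ⟨x, hx, hβ⟩
  set z : Fin (d+1) → ℤ := fun j => (β j : ℤ) - (γ0 j : ℤ) with hz
  have hxz : x = fun j => (z j : ℝ) := by
    funext j
    have e := congrFun hβ j
    simp only [natVecR, Pi.add_apply] at e
    simp only [hz]
    push_cast
    linarith
  obtain ⟨c, hc, hxw⟩ := hconeC hx
  have hzc : (fun j => (z j : ℝ)) = ∑ i, c i • (fun j => ((v i j : ℝ))) := by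
    rw [← hxz]
    exact hxw
  obtain ⟨q, hq0, hqz⟩ := rat_coeffs v z c hc hzc
  set m : Fin k → ℕ := fun i => ⌊q i⌋₊ with hm
  set ρZ : Fin (d+1) → ℤ := fun j => z j - ∑ i, (m i : ℤ) * (v i j : ℤ) with hρZ
  have hρZq : ∀ j, (ρZ j : ℚ) = ∑ i, (q i - m i) * (v i j : ℚ) := by
    intro j
    simp only [hρZ]
    push_cast
    rw [hqz j, ← Finset.sum_sub_distrib]
    exact Finset.sum_congr rfl (fun i _ => by ring)
  have hfloor1 : ∀ i, (m i : ℚ) ≤ q i := fun i => Nat.floor_le (hq0 i)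
  have hfloor2 : ∀ i, q i - m i ≤ 1 := by
    intro i
    have := Nat.lt_floor_add_one (q i)
    simp only [hm]
    linarith
  have h0ρ : ∀ j, 0 ≤ ρZ j := by
    intro j
    have hq' : (0:ℚ) ≤ (ρZ j : ℚ) := by
      rw [hρZq j]
      exact Finset.sum_nonneg (fun i _ => mul_nonneg (by linarith [hfloor1 i]) (by positivity))
    exact_mod_cast hq'
  have hTρ : ∀ j, ρZ j ≤ (T j : ℤ) := by
    intro j
    have hq' : (ρZ j : ℚ) ≤ (T j : ℚ) := by
      rw [hρZq j]
      simp only [hT]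
      push_cast
      refine Finset.sum_le_sum (fun i _ => ?_)
      exact mul_le_of_le_one_left (by positivity) (hfloor2 i)
    exact_mod_cast hq'
  set ρ : Fin (d+1) → ℕ := fun j => (ρZ j).toNat with hρ
  have hρcast : ∀ j, (ρ j : ℤ) = ρZ j := fun j => Int.toNat_of_nonneg (h0ρ j)
  have hρF : ρ ∈ F := by
    rw [hF, Fintype.mem_piFinset]
    intro j
    rw [Finset.mem_range]
    have e1 := hTρ j
    have e2 := hρcast j
    omega
  have hdecomp : β = (γ0 + ρ) + ∑ i, m i • v i := by
    funext j
    have hnat : (∑ i, m i • v i) j = ∑ i, m i * v i j := by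
      simp [Finset.sum_apply]
    simp only [Pi.add_apply, hnat]
    have hZ : (β j : ℤ) = ((γ0 j + ρ j + ∑ i, m i * v i j : ℕ) : ℤ) := by
      push_cast
      rw [hρcast j]
      simp only [hρZ, hz]
      ring
    exact_mod_cast hZ
  have hsumΓ : (∑ i, m i • v i) ∈ Γ := by
    rw [← hmemΓ' _]
    exact AddSubmonoid.sum_mem Γ' (fun i _ => nsmul_mem (show v i ∈ Γ' from hSΓ (hvS i)) (m i))
  have hγρ : γ0 + ρ ∈ Γ := by
    have hsplit : γ0 + ρ = A ρ + ∑ ρ' ∈ F.erase ρ, B ρ' := by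
      rw [hγ0, ← Finset.add_sum_erase F B hρF, ← hAB ρ]
      abel
    rw [hsplit]
    refine hadd _ (hA ρ) _ ?_
    rw [← hmemΓ' _]
    exact AddSubmonoid.sum_mem Γ' (fun ρ' _ => hB ρ')
  rw [hdecomp]
  exact hadd _ hγρ _ hsumΓ
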